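/- The sequence φ is summable and its total sum equals λ/(λ·t̄+1): Σ_{j=0}^∞ φ(j) = λ/(λ·t̄+1). -/
import Mathlib


open Filter

/-- `φ` is summable with total sum `λ/(λ·t̄+1)`. -/
theorem phi_summable_total
    (lam lam_e : ℝ) (hlam0 : 0 < lam) (hlam1 : lam < 1)
    (hle0 : 0 < lam_e) (hle1 : lam_e < 1)
    (tbar : ℕ)
    (φ : ℕ → ℝ)
    (hφ0 : φ 0 = lam * lam_e / (lam * (tbar : ℝ) + 1))
    (hφ1 : ∀ j, j < tbar → φ (j + 1) = (1 - lam) * (1 - lam_e) * φ j)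
    (hφ2 : ∀ j, tbar ≤ j → φ (j + 1) =
      (1 - lam) * (1 - lam_e) * φ j + lam * (1 - lam_e) * φ (j - tbar)) :
    Summable φ ∧ ∑' j : ℕ, φ j = lam / (lam * (tbar : ℝ) + 1) := by
  set α := (1 - lam) * (1 - lam_e) with hα
  set β := lam * (1 - lam_e) with hβ
  set ψ : ℕ → ℝ := fun j => if tbar ≤ j then φ (j - tbar) else 0 with hψ
  have hden : (0:ℝ) < lam * (tbar : ℝ) + 1 := by positivity
  have hφ0nn : 0 ≤ φ 0 := by
    rw [hφ0]; positivity
  have hαnn : 0 ≤ α := by nlinarith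
  have hβnn : 0 ≤ β := by nlinarith
  have hnonneg : ∀ j, 0 ≤ φ j := by
    intro j
    induction j using Nat.strong_induction_on with
    | _ j ih =>
      match j with
      | 0 => exact hφ0nn
      | Nat.succ j =>
        rcases lt_or_ge j tbar with h | h
        · rw [hφ1 j h]
          exact mul_nonneg hαnn (ih j (Nat.lt_succ_self j))
        · rw [hφ2 j h]
          exact add_nonneg (mul_nonneg hαnn (ih j (Nat.lt_succ_self j)))
            (mul_nonneg hβnn (ih (j - tbar) (by omega)))
  have hrec : ∀ j, φ (j + 1) = α * φ j + β * ψ j := by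
    intro j
    rcases lt_or_ge j tbar with h | h
    · rw [hφ1 j h, hψ]
      simp [Nat.not_le.mpr h]
    · rw [hφ2 j h, hψ]
      simp [h]
  have hshift : ∀ n, ∑ j ∈ Finset.range n, ψ j = ∑ k ∈ Finset.range (n - tbar), φ k := by
    intro n
    induction n with
    | zero => simp
    | succ n ih =>
      rw [Finset.sum_range_succ, ih]
      rcases lt_or_ge n tbar with h | h
      · have h1 : n + 1 - tbar = 0 := by omega
        have h2 : n - tbar = 0 := by omega
        simp [hψ, Nat.not_le.mpr h, h1, h2]
      · have h1 : n + 1 - tbar = (n - tbar) + 1 := by omega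
        rw [h1, Finset.sum_range_succ, hψ]
        simp [h]
  have hlen : lam_e ≠ 0 := ne_of_gt hle0
  have hbound : ∀ n, ∑ i ∈ Finset.range n, φ i ≤ φ 0 / lam_e := by
    intro n
    induction n with
    | zero => simp; positivity
    | succ n ih =>
      rw [Finset.sum_range_succ']
      have e1 : ∑ i ∈ Finset.range n, φ (i + 1)
          = α * (∑ i ∈ Finset.range n, φ i) + β * (∑ i ∈ Finset.range n, ψ i) := by
        rw [Finset.mul_sum, Finset.mul_sum, ← Finset.sum_add_distrib]
        exact Finset.sum_congr rfl fun i _ => hrec i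
      have e2 : ∑ k ∈ Finset.range (n - tbar), φ k ≤ ∑ i ∈ Finset.range n, φ i :=
        Finset.sum_le_sum_of_subset_of_nonneg
          (Finset.range_subset_range.mpr (by omega)) (fun i _ _ => hnonneg i)
      have hSnn : 0 ≤ ∑ i ∈ Finset.range n, φ i :=
        Finset.sum_nonneg fun i _ => hnonneg i
      rw [e1, hshift]
      have : α * (∑ i ∈ Finset.range n, φ i) + β * (∑ k ∈ Finset.range (n - tbar), φ k)
          ≤ (1 - lam_e) * (φ 0 / lam_e) := by
        have hab : α + β = 1 - lam_e := by rw [hα, hβ]; ring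
        nlinarith [mul_le_mul_of_nonneg_left e2 hβnn,
          mul_le_mul_of_nonneg_left ih hαnn,
          mul_le_mul_of_nonneg_left ih hβnn]
      have hfin : φ 0 + (1 - lam_e) * (φ 0 / lam_e) = φ 0 / lam_e := by
        field_simp
        ring
      linarith
  have hsum : Summable φ := summable_of_sum_range_le hnonneg hbound
  have hψshift : (fun n => ψ (n + tbar)) = φ := by
    funext n
    simp [hψ, Nat.le_add_left]
  have hψsum : Summable ψ := by
    rw [← summable_nat_add_iff tbar, hψshift]; exact hsum
  have htψ : ∑' j, ψ j = ∑' j, φ j := by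
    have h1 : ∑ i ∈ Finset.range tbar, ψ i = 0 :=
      Finset.sum_eq_zero fun i hi => by
        simp [hψ, Nat.not_le.mpr (Finset.mem_range.mp hi)]
    calc ∑' j, ψ j
        = ∑ i ∈ Finset.range tbar, ψ i + ∑' i, ψ (i + tbar) :=
          (Summable.sum_add_tsum_nat_add tbar hψsum).symm
      _ = ∑' j, φ j := by rw [h1, zero_add, hψshift]
  have hsplit : ∑' j, φ (j + 1) = α * (∑' j, φ j) + β * (∑' j, φ j) := by
    calc ∑' j, φ (j + 1)
        = ∑' j, (α * φ j + β * ψ j) := tsum_congr hrec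
      _ = α * (∑' j, φ j) + β * (∑' j, ψ j) := by
          rw [Summable.tsum_add (hsum.mul_left α) (hψsum.mul_left β), tsum_mul_left, tsum_mul_left]
      _ = α * (∑' j, φ j) + β * (∑' j, φ j) := by rw [htψ]
  have hzero : ∑' j, φ j = φ 0 + ∑' j, φ (j + 1) := Summable.tsum_eq_zero_add hsum
  refine ⟨hsum, ?_⟩
  have hab : α + β = 1 - lam_e := by rw [hα, hβ]; ring
  have heq : lam_e * (∑' j, φ j) = φ 0 := by
    have := hzero
    rw [hsplit] at this
    nlinarith [this]
  rw [hφ0] at heq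
  have hS : ∑' j, φ j = lam * lam_e / (lam * (tbar : ℝ) + 1) / lam_e := by
    rw [eq_div_iff hlen]
    linarith [heq]
  rw [hS, div_div, mul_comm (lam * (tbar : ℝ) + 1) lam_e, ← div_div,
    mul_div_assoc, div_self hlen, mul_one]
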